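/- Under Assumption ‖φ^{j₀}‖ < 1 for some j₀ ∈ ℕ, the stationary solution of the functional ARMA(1,q) equation X_n = φ X_{n−1} + ∑_{j=1}^q θ_j ε_{n−j} + ε_n is unique: any stationary solution X'_n equals the causal series solution X_n in L²_H. -/

import Mathlib

open MeasureTheory Filter Topology
open scoped RealInnerProductSpace ENNReal NNReal

section AuxLemmas

lemma aux_summable_norm_pow {H : Type*} [NormedAddCommGroup H] [NormedSpace ℝ H]
    (φ : H →L[ℝ] H) (j₀ : ℕ) (hj : j₀ ≠ 0) (hρ : ‖φ ^ j₀‖ < 1) :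
    Summable (fun m : ℕ => ‖φ ^ m‖) := by
  haveI : NeZero j₀ := ⟨hj⟩
  set ρ := ‖φ ^ j₀‖ with hρdef
  have hρ0 : 0 ≤ ρ := norm_nonneg _
  set M := ∑ r ∈ Finset.range j₀, ‖φ ^ r‖ with hM
  have h1 : Summable (fun p : ℕ × Fin j₀ => ρ ^ p.1) := by
    have := (summable_geometric_of_lt_one hρ0 hρ).mul_of_nonneg
      (summable_of_finite_support (Set.toFinite _) : Summable (fun _ : Fin j₀ => (1:ℝ)))
      (fun n => pow_nonneg hρ0 n) (fun _ => zero_le_one)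
    simpa using this
  have h2 : Summable (fun m : ℕ => ρ ^ (m / j₀)) := by
    have := (Nat.divModEquiv j₀).summable_iff.mpr h1
    simpa [Function.comp_def, Nat.divModEquiv] using this
  refine Summable.of_nonneg_of_le (fun m => norm_nonneg _) (fun m => ?_) (h2.mul_right M)
  have hmod : m % j₀ ∈ Finset.range j₀ := Finset.mem_range.mpr (Nat.mod_lt _ (Nat.pos_of_ne_zero hj))
  have hMle : ‖φ ^ (m % j₀)‖ ≤ M :=
    Finset.single_le_sum (f := fun r => ‖φ ^ r‖) (fun i _ => norm_nonneg _) hmod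
  have hppow : ‖(φ ^ j₀) ^ (m / j₀)‖ ≤ ρ ^ (m / j₀) := by
    rcases Nat.eq_zero_or_pos (m / j₀) with h | h
    · simp [h, ContinuousLinearMap.norm_id_le, ContinuousLinearMap.one_def]
    · exact norm_pow_le' _ h
  calc ‖φ ^ m‖ = ‖(φ ^ j₀) ^ (m / j₀) * φ ^ (m % j₀)‖ := by
        rw [← pow_mul, ← pow_add, Nat.div_add_mod]
    _ ≤ ‖(φ ^ j₀) ^ (m / j₀)‖ * ‖φ ^ (m % j₀)‖ := norm_mul_le _ _
    _ ≤ ρ ^ (m / j₀) * M := mul_le_mul hppow hMle (norm_nonneg _) (pow_nonneg hρ0 _)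

variable {H : Type*} [NormedAddCommGroup H] [NormedSpace ℝ H]

lemma aux_psi_le (q : ℕ) (φ : H →L[ℝ] H) (θ : ℕ → (H →L[ℝ] H)) (ψ : ℕ → (H →L[ℝ] H))
    (hψ : ∀ j : ℕ, ψ j =
      if j < q then ∑ k ∈ Finset.range (j + 1), (φ ^ (j - k)) ∘L θ k
      else (φ ^ (j - q)) ∘L ∑ k ∈ Finset.range (q + 1), (φ ^ (q - k)) ∘L θ k)
    {i : ℕ} (hi : i ≤ q) :
    ψ i = ∑ k ∈ Finset.range (i + 1), (φ ^ (i - k)) ∘L θ k := by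
  rcases eq_or_lt_of_le hi with rfl | h
  · rw [hψ, if_neg (lt_irrefl i), Nat.sub_self, pow_zero, ContinuousLinearMap.one_def,
      ContinuousLinearMap.id_comp]
  · rw [hψ, if_pos h]

lemma aux_psi_zero (q : ℕ) (φ : H →L[ℝ] H) (θ : ℕ → (H →L[ℝ] H)) (ψ : ℕ → (H →L[ℝ] H))
    (hθ0 : θ 0 = 1)
    (hψ : ∀ j : ℕ, ψ j =
      if j < q then ∑ k ∈ Finset.range (j + 1), (φ ^ (j - k)) ∘L θ k
      else (φ ^ (j - q)) ∘L ∑ k ∈ Finset.range (q + 1), (φ ^ (q - k)) ∘L θ k) :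
    ψ 0 = 1 := by
  rw [aux_psi_le q φ θ ψ hψ (Nat.zero_le q)]
  simp [hθ0, ContinuousLinearMap.one_def]

lemma aux_psi_succ (q : ℕ) (φ : H →L[ℝ] H) (θ : ℕ → (H →L[ℝ] H)) (ψ : ℕ → (H →L[ℝ] H))
    (hψ : ∀ j : ℕ, ψ j =
      if j < q then ∑ k ∈ Finset.range (j + 1), (φ ^ (j - k)) ∘L θ k
      else (φ ^ (j - q)) ∘L ∑ k ∈ Finset.range (q + 1), (φ ^ (q - k)) ∘L θ k)
    (j : ℕ) :
    ψ (j + 1) = φ ∘L ψ j + (if j + 1 ≤ q then θ (j + 1) else 0) := by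
  simp only [← ContinuousLinearMap.mul_def]
  by_cases h : j + 1 ≤ q
  · rw [if_pos h, aux_psi_le q φ θ ψ hψ h, aux_psi_le q φ θ ψ hψ (Nat.le_of_succ_le h),
      Finset.sum_range_succ]
    simp only [← ContinuousLinearMap.mul_def]
    rw [Finset.mul_sum, Nat.sub_self, pow_zero, one_mul]
    congr 1
    refine Finset.sum_congr rfl (fun k hk => ?_)
    have hk' : k ≤ j := Nat.lt_succ_iff.mp (Finset.mem_range.mp hk)
    rw [← mul_assoc, ← pow_succ']
    congr 2
    omega
  · rw [if_neg h, add_zero]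
    have h1 : ψ (j + 1) = (φ ^ (j + 1 - q)) ∘L ∑ k ∈ Finset.range (q + 1), (φ ^ (q - k)) ∘L θ k := by
      rw [hψ, if_neg (by omega)]
    have h2 : ψ j = (φ ^ (j - q)) ∘L ∑ k ∈ Finset.range (q + 1), (φ ^ (q - k)) ∘L θ k := by
      rw [hψ, if_neg (by omega)]
    rw [h1, h2]
    simp only [← ContinuousLinearMap.mul_def]
    rw [← mul_assoc, ← pow_succ']
    congr 2
    omega

end AuxLemmas

set_option maxHeartbeats 1000000 in
/-- Uniqueness: any stationary solution of the functional ARMA(1,q) equation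
coincides in `L²_H` with the causal series solution. -/
theorem stmt8 {Ω H : Type*} [MeasurableSpace Ω] (μ : Measure Ω) [IsProbabilityMeasure μ]
    [NormedAddCommGroup H] [InnerProductSpace ℝ H] [CompleteSpace H]
    [SecondCountableTopology H]
    (ε : ℤ → Ω → H) (σ2 : ℝ)
    (hmem : ∀ n, MemLp (ε n) 2 μ)
    (hmean : ∀ n (y : H), ∫ ω, ⟪ε n ω, y⟫ ∂μ = 0)
    (hvar : ∀ n, ∫ ω, ‖ε n ω‖ ^ 2 ∂μ = σ2)
    (hcov : ∀ n (y : H), ∫ ω, ⟪ε n ω, y⟫ • ε n ω ∂μ = ∫ ω, ⟪ε 0 ω, y⟫ • ε 0 ω ∂μ)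
    (hcross : ∀ n m : ℤ, n ≠ m → ∀ y : H, ∫ ω, ⟪ε m ω, y⟫ • ε n ω ∂μ = 0)
    (q : ℕ) (φ : H →L[ℝ] H) (θ : ℕ → (H →L[ℝ] H)) (hθ0 : θ 0 = 1)
    (hφ : ∃ j₀ : ℕ, ‖φ ^ j₀‖ < 1)
    (ψ : ℕ → (H →L[ℝ] H))
    (hψ : ∀ j : ℕ, ψ j =
      if j < q then ∑ k ∈ Finset.range (j + 1), (φ ^ (j - k)) ∘L θ k
      else (φ ^ (j - q)) ∘L ∑ k ∈ Finset.range (q + 1), (φ ^ (q - k)) ∘L θ k)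
    (X : ℤ → Ω → H) (hX : ∀ n ω, X n ω = ∑' j : ℕ, (ψ j) (ε (n - j) ω))
    (X' : ℤ → Ω → H) (hmem' : ∀ n, MemLp (X' n) 2 μ)
    (hstat : ∀ n : ℤ, ∫ ω, ‖X' n ω‖ ^ 2 ∂μ = ∫ ω, ‖X' 0 ω‖ ^ 2 ∂μ)
    (heq : ∀ n : ℤ, ∀ᵐ ω ∂μ,
      X' n ω = φ (X' (n - 1) ω) + (∑ j ∈ Finset.Icc 1 q, (θ j) (ε (n - j) ω)) + ε n ω) :
    ∀ n : ℤ, X' n =ᵐ[μ] X n := by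
  -- trivial case of a subsingleton space
  rcases subsingleton_or_nontrivial H with hH | hH
  · intro n
    filter_upwards with ω
    exact Subsingleton.elim _ _
  obtain ⟨j₀, hj₀⟩ := hφ
  have hj₀ne : j₀ ≠ 0 := by
    rintro rfl
    rw [pow_zero] at hj₀
    simp [norm_one] at hj₀
  -- summability of operator norms
  have hpow : Summable (fun m : ℕ => ‖φ ^ m‖) := aux_summable_norm_pow φ j₀ hj₀ne hj₀
  set B : H →L[ℝ] H := ∑ k ∈ Finset.range (q + 1), (φ ^ (q - k)) ∘L θ k with hB
  have hψsum : Summable (fun j : ℕ => ‖ψ j‖) := by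
    rw [← summable_nat_add_iff q]
    refine Summable.of_nonneg_of_le (fun _ => norm_nonneg _) (fun j => ?_) (hpow.mul_right ‖B‖)
    have : ψ (j + q) = (φ ^ j) ∘L B := by
      rw [hψ, if_neg (by omega)]
      congr 2
      omega
    rw [this]
    exact ContinuousLinearMap.opNorm_comp_le _ _
  have hψsum' : Summable (fun j : ℕ => ‖ψ j‖₊) := by
    rw [← NNReal.summable_coe]
    simpa using hψsum
  set SE : ℝ≥0∞ := ∑' j : ℕ, (‖ψ j‖₊ : ℝ≥0∞) with hSE
  have hSEfin : SE ≠ ⊤ := ENNReal.tsum_coe_ne_top_iff_summable.mpr hψsum'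
  have hεm : ∀ k : ℤ, AEStronglyMeasurable (ε k) μ := fun k => (hmem k).1
  -- evaluating L² norms
  have hsq : ∀ (f : Ω → H), MemLp f 2 μ →
      eLpNorm f 2 μ = ENNReal.ofReal (∫ ω, ‖f ω‖ ^ 2 ∂μ) ^ (1/2 : ℝ) := by
    intro f hf
    have hint : Integrable (fun ω => ‖f ω‖ ^ 2) μ := by
      have h := hf.integrable_norm_rpow two_ne_zero ENNReal.ofNat_ne_top
      simp only [ENNReal.toReal_ofNat, Real.rpow_two] at h
      exact h
    rw [eLpNorm_eq_lintegral_rpow_enorm_toReal two_ne_zero ENNReal.ofNat_ne_top,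
      ENNReal.toReal_ofNat]
    congr 1
    rw [ofReal_integral_eq_lintegral_ofReal hint
      (Eventually.of_forall (fun ω => sq_nonneg _))]
    refine lintegral_congr (fun ω => ?_)
    rw [← Real.rpow_two, ← ENNReal.ofReal_rpow_of_nonneg (norm_nonneg _) (by norm_num),
      ofReal_norm]
  -- the L² norm of the noise
  set K2 : ℝ≥0∞ := ENNReal.ofReal σ2 ^ (1/2 : ℝ) with hK2
  have hK2fin : K2 ≠ ⊤ := by
    rw [hK2]
    exact ENNReal.rpow_ne_top_of_nonneg (by norm_num) ENNReal.ofReal_ne_top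
  have hε2 : ∀ k : ℤ, eLpNorm (ε k) 2 μ = K2 := by
    intro k
    rw [hsq (ε k) (hmem k), hvar k]
  have hε1 : ∀ k : ℤ, ∫⁻ ω, (‖ε k ω‖₊ : ℝ≥0∞) ∂μ ≤ K2 := by
    intro k
    calc ∫⁻ ω, (‖ε k ω‖₊ : ℝ≥0∞) ∂μ = eLpNorm (ε k) 1 μ := by rw [eLpNorm_one_eq_lintegral_enorm]; rfl
      _ ≤ eLpNorm (ε k) 2 μ := eLpNorm_le_eLpNorm_of_exponent_le one_le_two (hεm k)
      _ = K2 := hε2 k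
  -- a.e. absolute convergence of the causal series
  have hae_sum : ∀ n : ℤ, ∀ᵐ ω ∂μ, Summable (fun j : ℕ => ‖ψ j‖ * ‖ε (n - j) ω‖) := by
    intro n
    have hmeas : ∀ j : ℕ, AEMeasurable
        (fun ω => (‖ψ j‖₊ : ℝ≥0∞) * (‖ε (n - j) ω‖₊ : ℝ≥0∞)) μ :=
      fun j => ((hεm (n - j)).enorm).const_mul _
    have hfin : ∫⁻ ω, ∑' j : ℕ, (‖ψ j‖₊ : ℝ≥0∞) * (‖ε (n - j) ω‖₊ : ℝ≥0∞) ∂μ ≠ ⊤ := by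
      rw [lintegral_tsum hmeas]
      have hle : (∑' j : ℕ, ∫⁻ ω, (‖ψ j‖₊ : ℝ≥0∞) * (‖ε (n - j) ω‖₊ : ℝ≥0∞) ∂μ)
          ≤ ∑' j : ℕ, (‖ψ j‖₊ : ℝ≥0∞) * K2 := by
        refine ENNReal.tsum_le_tsum (fun j => ?_)
        exact le_trans (le_of_eq (lintegral_const_mul' _ _ ENNReal.coe_ne_top))
          (mul_le_mul_right (hε1 (n - j)) _)
      rw [ENNReal.tsum_mul_right] at hle
      exact ne_top_of_le_ne_top (ENNReal.mul_ne_top hSEfin hK2fin) hle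
    have hlt := ae_lt_top' (AEMeasurable.ennreal_tsum hmeas) hfin
    filter_upwards [hlt] with ω hω
    have h1 : Summable (fun j : ℕ => (‖ψ j‖₊ * ‖ε (n - j) ω‖₊ : ℝ≥0)) := by
      rw [← ENNReal.tsum_coe_ne_top_iff_summable]
      push_cast
      exact hω.ne
    have h2 := NNReal.summable_coe.mpr h1
    simpa [NNReal.coe_mul] using h2
  -- pointwise summability of the series itself
  have hsum_pt : ∀ (n : ℤ) (ω : Ω), Summable (fun j : ℕ => ‖ψ j‖ * ‖ε (n - j) ω‖) →
      Summable (fun j : ℕ => ψ j (ε (n - j) ω)) := by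
    intro n ω hω
    exact Summable.of_norm_bounded hω (fun j => (ψ j).le_opNorm _)
  -- partial sums
  set S : ℕ → ℤ → Ω → H := fun m n ω => ∑ j ∈ Finset.range m, ψ j (ε (n - j) ω) with hS
  have hSmeas : ∀ m n, AEStronglyMeasurable (S m n) μ := by
    intro m n
    exact Finset.aestronglyMeasurable_fun_sum _
      (fun j _ => ((ψ j).continuous.comp_aestronglyMeasurable (hεm (n - j))))
  have htendsto : ∀ n : ℤ, ∀ᵐ ω ∂μ, Tendsto (fun m => S m n ω) atTop (𝓝 (X n ω)) := by
    intro n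
    filter_upwards [hae_sum n] with ω hω
    rw [hX n ω]
    exact (hsum_pt n ω hω).hasSum.tendsto_sum_nat
  have hXmeas : ∀ n : ℤ, AEStronglyMeasurable (X n) μ := by
    intro n
    exact aestronglyMeasurable_of_tendsto_ae atTop (fun m => hSmeas m n) (htendsto n)
  -- uniform L² bound for X
  have hterm_norm : ∀ (j : ℕ) (n : ℤ),
      eLpNorm (fun ω => ψ j (ε (n - j) ω)) 2 μ ≤ (‖ψ j‖₊ : ℝ≥0∞) * K2 := by
    intro j n
    have h := eLpNorm_le_nnreal_smul_eLpNorm_of_ae_le_mul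
      (Eventually.of_forall (fun ω => (ψ j).le_opNNNorm (ε (n - j) ω))) (2 : ℝ≥0∞)
      (μ := μ)
    rw [ENNReal.smul_def, smul_eq_mul, hε2 (n - j)] at h
    exact h
  have hXnorm : ∀ n : ℤ, eLpNorm (X n) 2 μ ≤ SE * K2 := by
    intro n
    refine le_trans (Lp.eLpNorm_lim_le_liminf_eLpNorm (fun m => hSmeas m n) _ (htendsto n)) ?_
    refine liminf_le_of_le (by isBoundedDefault) ?_
    refine fun b hb => ?_
    obtain ⟨m, hm⟩ := hb.exists
    refine le_trans hm ?_
    have hSeq : S m n = ∑ j ∈ Finset.range m, (fun ω => ψ j (ε (n - j) ω)) := by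
      funext ω
      rw [Finset.sum_apply]
    rw [hSeq]
    calc eLpNorm (∑ j ∈ Finset.range m, (fun ω => ψ j (ε (n - j) ω))) 2 μ
        ≤ ∑ j ∈ Finset.range m, eLpNorm (fun ω => ψ j (ε (n - j) ω)) 2 μ :=
          eLpNorm_sum_le (fun j _ => ((ψ j).continuous.comp_aestronglyMeasurable (hεm (n - j))))
            one_le_two
      _ ≤ ∑ j ∈ Finset.range m, (‖ψ j‖₊ : ℝ≥0∞) * K2 :=
          Finset.sum_le_sum (fun j _ => hterm_norm j n)
      _ = (∑ j ∈ Finset.range m, (‖ψ j‖₊ : ℝ≥0∞)) * K2 := by rw [Finset.sum_mul]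
      _ ≤ SE * K2 := mul_le_mul_left (ENNReal.sum_le_tsum _) _
  -- X satisfies the ARMA recursion a.e.
  have hψ0 : ψ 0 = 1 := aux_psi_zero q φ θ ψ hθ0 hψ
  have hXrec : ∀ n : ℤ, ∀ᵐ ω ∂μ,
      X n ω = φ (X (n - 1) ω) + (∑ j ∈ Finset.Icc 1 q, (θ j) (ε (n - j) ω)) + ε n ω := by
    intro n
    filter_upwards [hae_sum n, hae_sum (n - 1)] with ω h1 h2
    have hs1 : Summable (fun j : ℕ => ψ j (ε (n - j) ω)) := hsum_pt n ω h1
    have hs2 : Summable (fun j : ℕ => ψ j (ε (n - 1 - j) ω)) := hsum_pt (n - 1) ω h2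
    have hidx : ∀ j : ℕ, (n - ((j : ℤ) + 1)) = (n - 1) - j := fun j => by ring
    have hterm : ∀ j : ℕ, ψ (j + 1) (ε (n - (j + 1 : ℕ)) ω)
        = φ (ψ j (ε (n - 1 - j) ω)) +
          (if j + 1 ≤ q then (θ (j + 1)) (ε (n - 1 - j) ω) else 0) := by
      intro j
      have : (n - (j + 1 : ℕ)) = n - 1 - j := by push_cast; ring
      rw [this, aux_psi_succ q φ θ ψ hψ j]
      rw [ContinuousLinearMap.add_apply, ContinuousLinearMap.comp_apply]
      congr 1
      split <;> simp
    have hsφ : Summable (fun j : ℕ => φ (ψ j (ε (n - 1 - j) ω))) :=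
      (hs2.hasSum.mapL φ).summable
    have hsθ : Summable (fun j : ℕ =>
        (if j + 1 ≤ q then (θ (j + 1)) (ε (n - 1 - j) ω) else 0)) := by
      apply summable_of_ne_finset_zero (s := Finset.range q)
      intro j hj
      rw [if_neg (by simp at hj; omega)]
    have key : X n ω = ε n ω + (φ (X (n - 1) ω) +
        ∑ j ∈ Finset.Icc 1 q, (θ j) (ε (n - j) ω)) := by
      rw [hX n ω, Summable.tsum_eq_zero_add hs1]
      congr 1
      · rw [hψ0]
        simp
      calc (∑' j : ℕ, ψ (j + 1) (ε (n - (j + 1 : ℕ)) ω))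
          = ∑' j : ℕ, (φ (ψ j (ε (n - 1 - j) ω)) +
            (if j + 1 ≤ q then (θ (j + 1)) (ε (n - 1 - j) ω) else 0)) := tsum_congr hterm
        _ = (∑' j : ℕ, φ (ψ j (ε (n - 1 - j) ω))) +
            ∑' j : ℕ, (if j + 1 ≤ q then (θ (j + 1)) (ε (n - 1 - j) ω) else 0) :=
            Summable.tsum_add hsφ hsθ
        _ = φ (X (n - 1) ω) + ∑ j ∈ Finset.Icc 1 q, (θ j) (ε (n - j) ω) := by
            congr 1
            · rw [hX (n - 1) ω, φ.map_tsum hs2]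
            · rw [tsum_eq_sum (s := Finset.range q)
                (fun j hj => by rw [if_neg (by simp at hj; omega)])]
              rw [← Finset.Ico_add_one_right_eq_Icc, Finset.sum_Ico_eq_sum_range]
              refine Finset.sum_congr (by norm_num) (fun j hj => ?_)
              have hj' : j + 1 ≤ q := by simp at hj; omega
              rw [if_pos (by omega)]
              congr 2
              · omega
              · push_cast; ring
    rw [key]
    abel
  -- difference satisfies the homogeneous recursion
  have hdiff : ∀ n : ℤ, ∀ᵐ ω ∂μ, X' n ω - X n ω = φ (X' (n - 1) ω - X (n - 1) ω) := by
    intro n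
    filter_upwards [heq n, hXrec n] with ω e1 e2
    rw [e1, e2, map_sub]
    abel
  have hiter : ∀ (m : ℕ) (n : ℤ), ∀ᵐ ω ∂μ,
      X' n ω - X n ω = (φ ^ m) (X' (n - m) ω - X (n - m) ω) := by
    intro m
    induction m with
    | zero =>
      intro n
      filter_upwards with ω
      simp
    | succ m ih =>
      intro n
      filter_upwards [ih n, hdiff (n - m)] with ω e1 e2
      rw [e1, e2, ← ContinuousLinearMap.comp_apply, ← ContinuousLinearMap.mul_def, ← pow_succ]
      congr 2 <;> push_cast <;> ring
  -- uniform L² bound for X'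
  set K0 : ℝ≥0∞ := ENNReal.ofReal (∫ ω, ‖X' 0 ω‖ ^ 2 ∂μ) ^ (1/2 : ℝ) with hK0
  have hX'norm : ∀ k : ℤ, eLpNorm (X' k) 2 μ = K0 := by
    intro k
    rw [hsq (X' k) (hmem' k), hstat k]
  have hK0fin : K0 ≠ ⊤ := ENNReal.rpow_ne_top_of_nonneg (by norm_num) ENNReal.ofReal_ne_top
  set K' : ℝ≥0∞ := K0 + SE * K2 with hK'
  have hK'fin : K' ≠ ⊤ := by
    rw [hK']
    exact ENNReal.add_ne_top.mpr ⟨hK0fin, ENNReal.mul_ne_top hSEfin hK2fin⟩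
  -- conclusion
  intro n
  have hDmeas : AEStronglyMeasurable (fun ω => X' n ω - X n ω) μ := (hmem' n).1.sub (hXmeas n)
  have hbound : ∀ k : ℕ,
      eLpNorm (fun ω => X' n ω - X n ω) 2 μ ≤ (‖φ ^ j₀‖₊ : ℝ≥0∞) ^ k * K' := by
    intro k
    have h1 : eLpNorm (fun ω => X' n ω - X n ω) 2 μ
        ≤ ‖φ ^ (j₀ * k)‖₊ • eLpNorm (fun ω => X' (n - (j₀ * k : ℕ)) ω - X (n - (j₀ * k : ℕ)) ω) 2 μ := by
      refine eLpNorm_le_nnreal_smul_eLpNorm_of_ae_le_mul ?_ 2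
      filter_upwards [hiter (j₀ * k) n] with ω hω
      rw [hω]
      exact (φ ^ (j₀ * k)).le_opNNNorm _
    have h2 : eLpNorm (fun ω => X' (n - (j₀ * k : ℕ)) ω - X (n - (j₀ * k : ℕ)) ω) 2 μ ≤ K' := by
      refine le_trans (eLpNorm_sub_le (hmem' _).1 (hXmeas _) one_le_two) ?_
      rw [hK']
      exact add_le_add (le_of_eq (hX'norm _)) (hXnorm _)
    have h3 : (‖φ ^ (j₀ * k)‖₊ : ℝ≥0∞) ≤ (‖φ ^ j₀‖₊ : ℝ≥0∞) ^ k := by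
      rw [pow_mul]
      rcases Nat.eq_zero_or_pos k with rfl | hk
      · simp [nnnorm_one]
      · have hnn : ‖(φ ^ j₀) ^ k‖₊ ≤ ‖φ ^ j₀‖₊ ^ k := by
          rw [← NNReal.coe_le_coe]
          push_cast
          exact norm_pow_le' _ hk
        calc (‖(φ ^ j₀) ^ k‖₊ : ℝ≥0∞) ≤ ((‖φ ^ j₀‖₊ ^ k : ℝ≥0) : ℝ≥0∞) := ENNReal.coe_le_coe.mpr hnn
          _ = (‖φ ^ j₀‖₊ : ℝ≥0∞) ^ k := by push_cast; ring
    calc eLpNorm (fun ω => X' n ω - X n ω) 2 μ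
        ≤ (‖φ ^ (j₀ * k)‖₊ : ℝ≥0∞) * eLpNorm (fun ω => X' (n - (j₀ * k : ℕ)) ω - X (n - (j₀ * k : ℕ)) ω) 2 μ := by
          rw [ENNReal.smul_def, smul_eq_mul] at h1
          exact h1
      _ ≤ (‖φ ^ j₀‖₊ : ℝ≥0∞) ^ k * K' := mul_le_mul' h3 h2
  have hρlt : (‖φ ^ j₀‖₊ : ℝ≥0∞) < 1 := by
    rw [← ENNReal.coe_one, ENNReal.coe_lt_coe, ← NNReal.coe_lt_coe]
    simpa using hj₀
  have htend : Tendsto (fun k : ℕ => (‖φ ^ j₀‖₊ : ℝ≥0∞) ^ k * K') atTop (𝓝 0) := by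
    have := ENNReal.Tendsto.mul_const (ENNReal.tendsto_pow_atTop_nhds_zero_of_lt_one hρlt)
      (Or.inr hK'fin)
    simpa using this
  have hzero : eLpNorm (fun ω => X' n ω - X n ω) 2 μ = 0 :=
    le_antisymm (ge_of_tendsto' htend hbound) zero_le
  have := (eLpNorm_eq_zero_iff hDmeas two_ne_zero).mp hzero
  filter_upwards [this] with ω hω
  have h : X' n ω - X n ω = 0 := hω
  exact sub_eq_zero.mp h
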